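/- arXiv:1211.5694 — 2 statements merged into one kernel-verified Lean document; each statement's English description precedes it below -/
import Mathlib

section
/- Let d ≥ 3 be a natural number and let G be a simple graph that is acyclic and d-regular (every vertex has exactly d neighbors). Then for every finite set A of vertices of G, the edge boundary ∂A is finite and satisfies #∂A ≥ (d-2)·#A. -/
open SimpleGraph Finset

section Aux
variable {V : Type*} {G : SimpleGraph V}

/-- If `y` lies on a walk from `x` to `r`, then `dist y r ≤ p.length`. -/
lemma aux_dist_le_of_mem_support {x r y : V} (p : G.Walk x r) (hy : y ∈ p.support) :
    G.dist y r ≤ p.length := by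
  classical
  have hlen : (p.takeUntil y hy).length + (p.dropUntil y hy).length = p.length := by
    rw [← SimpleGraph.Walk.length_append, p.take_spec hy]
  calc G.dist y r ≤ (p.dropUntil y hy).length := SimpleGraph.dist_le _
    _ ≤ p.length := by omega

/-- Strict version for shortest walks. -/
lemma aux_dist_lt_of_mem_support {x r y : V} (p : G.Walk x r) (hp : p.length = G.dist x r)
    (hy : y ∈ p.support) (hne : y ≠ x) : G.dist y r < G.dist x r := by
  classical
  have hlen : (p.takeUntil y hy).length + (p.dropUntil y hy).length = p.length := by
    rw [← SimpleGraph.Walk.length_append, p.take_spec hy]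
  have ht : 1 ≤ (p.takeUntil y hy).length := by
    rcases Nat.eq_zero_or_pos (p.takeUntil y hy).length with h0 | h1
    · exact absurd (SimpleGraph.Walk.eq_of_length_eq_zero h0).symm hne
    · exact h1
  have := SimpleGraph.dist_le (p.dropUntil y hy)
  omega

/-- In an acyclic graph, adjacent vertices have different distances to any vertex
reachable from them. -/
lemma aux_dist_ne {a b r : V} (hac : G.IsAcyclic) (hab : G.Adj a b)
    (hra : G.Reachable a r) : G.dist a r ≠ G.dist b r := by
  intro h
  have hrb : G.Reachable b r := hab.symm.reachable.trans hra
  obtain ⟨pa, hpa⟩ := hra.exists_walk_length_eq_dist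
  obtain ⟨pb, hpb⟩ := hrb.exists_walk_length_eq_dist
  have hbridge := (SimpleGraph.isAcyclic_iff_forall_adj_isBridge.mp hac) hab
  rw [SimpleGraph.isBridge_iff_adj_and_forall_walk_mem_edges] at hbridge
  have hmem := hbridge (pa.append pb.reverse)
  rw [SimpleGraph.Walk.edges_append, List.mem_append] at hmem
  rcases hmem with hm | hm
  · have hbsup : b ∈ pa.support := SimpleGraph.Walk.snd_mem_support_of_mem_edges pa hm
    have := aux_dist_lt_of_mem_support pa hpa hbsup hab.ne'
    omega
  · rw [SimpleGraph.Walk.edges_reverse, List.mem_reverse] at hm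
    have hasup : a ∈ pb.support := SimpleGraph.Walk.fst_mem_support_of_mem_edges pb hm
    have := aux_dist_lt_of_mem_support pb hpb hasup hab.ne
    omega

/-- In an acyclic graph, a vertex has at most one neighbor strictly closer to a
reachable root. -/
lemma aux_parent_unique {v a b r : V} (hac : G.IsAcyclic) (hva : G.Adj v a) (hvb : G.Adj v b)
    (hrv : G.Reachable v r) (ha : G.dist a r < G.dist v r) (hb : G.dist b r < G.dist v r) :
    a = b := by
  by_contra hne
  have hra : G.Reachable a r := hva.symm.reachable.trans hrv
  have hrb : G.Reachable b r := hvb.symm.reachable.trans hrv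
  obtain ⟨pa, hpa⟩ := hra.exists_walk_length_eq_dist
  obtain ⟨pb, hpb⟩ := hrb.exists_walk_length_eq_dist
  have hbridge := (SimpleGraph.isAcyclic_iff_forall_adj_isBridge.mp hac) hva
  rw [SimpleGraph.isBridge_iff_adj_and_forall_walk_mem_edges] at hbridge
  have hmem := hbridge (SimpleGraph.Walk.cons hvb (pb.append pa.reverse))
  rw [SimpleGraph.Walk.edges_cons, List.mem_cons] at hmem
  rcases hmem with hm | hm
  · rw [Sym2.eq_iff] at hm
    rcases hm with ⟨-, h⟩ | ⟨h, h'⟩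
    · exact hne h
    · exact hvb.ne h
  · rw [SimpleGraph.Walk.edges_append, List.mem_append] at hm
    rcases hm with hm | hm
    · have hvsup : v ∈ pb.support := SimpleGraph.Walk.fst_mem_support_of_mem_edges pb hm
      have := aux_dist_le_of_mem_support pb hvsup
      omega
    · rw [SimpleGraph.Walk.edges_reverse, List.mem_reverse] at hm
      have hvsup : v ∈ pa.support := SimpleGraph.Walk.fst_mem_support_of_mem_edges pa hm
      have := aux_dist_le_of_mem_support pa hvsup
      omega

end Aux

/-- The edge boundary of a set of vertices `A`: the edges of `G` with exactly one
endpoint in `A`. -/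
def edgeBoundary {V : Type*} (G : SimpleGraph V) (A : Set V) : Set (Sym2 V) :=
  {e ∈ G.edgeSet | ∃ v w, e = s(v, w) ∧ v ∈ A ∧ w ∉ A}

/-- Isoperimetric inequality on the `d`-regular tree: for every finite set `A` of
vertices, the edge boundary is finite and `#∂A ≥ (d-2)·#A`. -/
theorem edgeBoundary_card_ge_of_acyclic_regular
    {V : Type*} (d : ℕ) (hd : 3 ≤ d) (G : SimpleGraph V)
    [∀ v, Fintype (G.neighborSet v)]
    (hac : G.IsAcyclic) (hreg : G.IsRegularOfDegree d)
    (A : Set V) (hA : A.Finite) :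
    (edgeBoundary G A).Finite ∧ (d - 2) * A.ncard ≤ (edgeBoundary G A).ncard := by
  classical
  set B : Finset V := hA.toFinset with hB
  -- the darts (ordered edges) starting in A
  set D : Finset (V × V) := B.biUnion (fun v => (G.neighborFinset v).image (fun w => (v, w)))
    with hD
  have hmemD : ∀ p : V × V, p ∈ D ↔ p.1 ∈ A ∧ G.Adj p.1 p.2 := by
    rintro ⟨v, w⟩
    simp only [hD, Finset.mem_biUnion, Finset.mem_image, SimpleGraph.mem_neighborFinset,
      hB, Set.Finite.mem_toFinset]
    constructor
    · rintro ⟨x, hx, y, hy, h⟩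
      obtain ⟨h1, h2⟩ := Prod.ext_iff.mp h
      dsimp at h1 h2
      subst h1; subst h2; exact ⟨hx, hy⟩
    · rintro ⟨hv, hw⟩; exact ⟨v, hv, w, hw, rfl⟩
  have hcardD : D.card = d * B.card := by
    rw [hD, Finset.card_biUnion]
    · rw [Finset.sum_congr rfl (g := fun _ => d) (fun v _ => ?_), Finset.sum_const, smul_eq_mul,
        mul_comm]
      rw [Finset.card_image_of_injective _ (fun a b h => (Prod.ext_iff.mp h).2)]
      exact hreg v
    · intro x _ y _ hxy
      simp only [Finset.disjoint_left, Finset.mem_image]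
      rintro p ⟨a, _, rfl⟩ ⟨b, _, h⟩
      exact hxy ((Prod.ext_iff.mp h).1).symm
  set Dout : Finset (V × V) := D.filter (fun p => p.2 ∉ A) with hDout
  set Din : Finset (V × V) := D.filter (fun p => ¬ p.2 ∉ A) with hDin
  have hsplit : Dout.card + Din.card = D.card :=
    Finset.card_filter_add_card_filter_not _
  set F : V × V → Sym2 V := fun p => s(p.1, p.2) with hF
  set Bd : Finset (Sym2 V) := Dout.image F with hBd
  set I : Finset (Sym2 V) := Din.image F with hI
  -- the boundary is the image of Dout
  have hbd : edgeBoundary G A = ↑Bd := by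
    ext e
    simp only [edgeBoundary, Set.mem_setOf_eq, hBd, Finset.coe_image, Set.mem_image,
      Finset.mem_coe, hDout, Finset.mem_filter, hF]
    constructor
    · rintro ⟨he, v, w, rfl, hv, hw⟩
      exact ⟨(v, w), ⟨(hmemD (v, w)).mpr ⟨hv, G.mem_edgeSet.mp he⟩, hw⟩, rfl⟩
    · rintro ⟨⟨v, w⟩, ⟨hp, hw⟩, rfl⟩
      obtain ⟨hv, hadj⟩ := (hmemD (v, w)).mp hp
      exact ⟨G.mem_edgeSet.mpr hadj, v, w, rfl, hv, hw⟩
  have hDoutcard : Dout.card = Bd.card := by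
    rw [hBd]
    refine (Finset.card_image_of_injOn ?_).symm
    rintro ⟨v, w⟩ hvw ⟨v', w'⟩ hvw' h
    rw [Finset.mem_coe, hDout, Finset.mem_filter] at hvw hvw'
    obtain ⟨hv, -⟩ := hmemD _ |>.mp hvw.1
    obtain ⟨hv', -⟩ := hmemD _ |>.mp hvw'.1
    simp only [hF, Sym2.eq_iff] at h
    dsimp at h hv hv' hvw hvw'
    rcases h with ⟨rfl, rfl⟩ | ⟨rfl, rfl⟩
    · rfl
    · exact absurd hv' hvw.2
  have hDincard : Din.card ≤ 2 * I.card := by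
    rw [hI]
    refine Finset.card_le_mul_card_image _ 2 ?_
    intro e he
    obtain ⟨⟨x, y⟩, -, rfl⟩ := Finset.mem_image.mp he
    refine le_trans (Finset.card_le_card (t := {(x, y), (y, x)}) ?_) ?_
    · rintro ⟨a, b⟩ hab
      rw [Finset.mem_filter] at hab
      have := hab.2
      simp only [hF, Sym2.eq_iff] at this
      simp only [Finset.mem_insert, Finset.mem_singleton, Prod.mk.injEq]
      tauto
    · exact le_trans (Finset.card_insert_le _ _) (by simp)
  -- every edge of I has both endpoints in A and is an edge of G
  have hIspec : ∀ e ∈ I, ∃ a b, e = s(a, b) ∧ G.Adj a b ∧ a ∈ A ∧ b ∈ A := by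
    intro e he
    obtain ⟨⟨x, y⟩, hxy, rfl⟩ := Finset.mem_image.mp (hI ▸ he)
    rw [hDin, Finset.mem_filter, not_not] at hxy
    obtain ⟨hx, hadj⟩ := hmemD _ |>.mp hxy.1
    exact ⟨x, y, rfl, hadj, hx, hxy.2⟩
  -- forest bound : I.card ≤ B.card
  have hIB : I.card ≤ B.card := by
    set root : V → V := fun x => ((G.connectedComponentMk x).out) with hroot
    have hroot_reach : ∀ x, G.Reachable x (root x) := by
      intro x
      refine (SimpleGraph.ConnectedComponent.exact ?_).symm
      exact Quot.out_eq _
    have hroot_adj : ∀ {x y : V}, G.Adj x y → root x = root y := by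
      intro x y h
      simp only [hroot]
      exact congrArg Quot.out (SimpleGraph.ConnectedComponent.sound h.reachable)
    set pick : Sym2 V → V := fun e =>
      if G.dist e.out.1 (root e.out.1) < G.dist e.out.2 (root e.out.1) then e.out.2 else e.out.1
      with hpick
    have hout : ∀ e : Sym2 V, e = s(e.out.1, e.out.2) := by
      intro e
      conv_lhs => rw [← e.out_eq]
    have hspec : ∀ e ∈ I, ∃ u, G.Adj (pick e) u ∧ e = s(pick e, u) ∧ pick e ∈ A ∧
        G.dist u (root (pick e)) < G.dist (pick e) (root (pick e)) := by
      intro e he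
      obtain ⟨a, b, hab, hadj, ha, hb⟩ := hIspec e he
      have hxy : s(e.out.1, e.out.2) = s(a, b) := by rw [← hout e, hab]
      obtain ⟨hadjxy, hxA, hyA⟩ :
          G.Adj e.out.1 e.out.2 ∧ e.out.1 ∈ A ∧ e.out.2 ∈ A := by
        rcases Sym2.eq_iff.mp hxy with ⟨h1, h2⟩ | ⟨h1, h2⟩
        · exact ⟨by rw [h1, h2]; exact hadj, by rw [h1]; exact ha, by rw [h2]; exact hb⟩
        · exact ⟨by rw [h1, h2]; exact hadj.symm, by rw [h1]; exact hb, by rw [h2]; exact ha⟩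
      have hrr : root e.out.2 = root e.out.1 := (hroot_adj hadjxy).symm
      have hne' := aux_dist_ne hac hadjxy (hroot_reach e.out.1)
      by_cases hlt : G.dist e.out.1 (root e.out.1) < G.dist e.out.2 (root e.out.1)
      · refine ⟨e.out.1, ?_, ?_, ?_, ?_⟩
        · simp only [hpick, if_pos hlt]; exact hadjxy.symm
        · simp only [hpick, if_pos hlt]; exact (hout e).trans Sym2.eq_swap
        · simp only [hpick, if_pos hlt]; exact hyA
        · simp only [hpick, if_pos hlt, hrr]; exact hlt
      · have hgt : G.dist e.out.2 (root e.out.1) < G.dist e.out.1 (root e.out.1) := by omega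
        refine ⟨e.out.2, ?_, ?_, ?_, ?_⟩
        · simp only [hpick, if_neg hlt]; exact hadjxy
        · simp only [hpick, if_neg hlt]; exact hout e
        · simp only [hpick, if_neg hlt]; exact hxA
        · simp only [hpick, if_neg hlt]; exact hgt
    refine Finset.card_le_card_of_injOn pick (fun e he => ?_) ?_
    · obtain ⟨u, -, -, hmA, -⟩ := hspec e he
      rw [hB, Finset.mem_coe, Set.Finite.mem_toFinset]; exact hmA
    · intro e1 h1 e2 h2 hpp
      rw [Finset.mem_coe] at h1 h2
      obtain ⟨u1, ha1, he1, -, hd1⟩ := hspec e1 h1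
      obtain ⟨u2, ha2, he2, -, hd2⟩ := hspec e2 h2
      rw [hpp] at ha1 hd1 he1
      have hu : u1 = u2 :=
        aux_parent_unique hac ha1 ha2 (hroot_reach _) hd1 hd2
      rw [hu] at he1
      exact he1.trans he2.symm
  -- conclusion
  have hfin : (edgeBoundary G A).Finite := by rw [hbd]; exact Bd.finite_toSet
  refine ⟨hfin, ?_⟩
  have hnc : (edgeBoundary G A).ncard = Bd.card := by rw [hbd, Set.ncard_coe_finset]
  have hAnc : A.ncard = B.card := by rw [hB, Set.ncard_eq_toFinset_card A hA]
  rw [hnc, hAnc, Nat.sub_mul]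
  have key : d * B.card ≤ Bd.card + 2 * B.card := by
    calc d * B.card = Dout.card + Din.card := by rw [hsplit, hcardD]
      _ ≤ Bd.card + 2 * I.card := by omega
      _ ≤ Bd.card + 2 * B.card := by omega
  omega
end

section
/- Let d ≥ 3 be a natural number, let λ ≥ 1 and α > 0 be real numbers satisfying λ(d-1)α² - dα + λ ≤ 0. Let G be a simple graph on a vertex set V and let h : V → ℤ be a function such that every vertex v has exactly one neighbor u with h(u) = h(v) - 1, exactly d-1 neighbors u with h(u) = h(v) + 1, and every neighbor u of v satisfies h(u) = h(v) + 1 or h(u) = h(v) - 1. Then for every finite set U ⊆ V, ∑_{v ∈ U} ∑_{u : u adjacent to v, u ∉ U} (λ·α^{h(u)} - α^{h(v)}) ≤ 0, where α^m denotes the integer power of the positive real α. -/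
/-- The supermartingale inequality (5.2): on the `d`-regular tree oriented by a
height function `h` (one parent at height `h v - 1` and `d-1` children at height
`h v + 1` per vertex), if `λ(d-1)α² - dα + λ ≤ 0` then for every finite set `U`
of vertices, `∑_{v ∈ U} ∑_{u ∼ v, u ∉ U} (λ·α^{h(u)} - α^{h(v)}) ≤ 0`. -/
theorem boundary_sum_nonpos_of_quadratic
    {V : Type*} (d : ℕ) (hd : 3 ≤ d) (lam α : ℝ) (hlam : 1 ≤ lam) (hα : 0 < α)
    (hquad : lam * (d - 1) * α ^ 2 - d * α + lam ≤ 0)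
    (G : SimpleGraph V) (h : V → ℤ)
    (hparent : ∀ v, ∃! u, G.Adj v u ∧ h u = h v - 1)
    (hchildren : ∀ v, {u | G.Adj v u ∧ h u = h v + 1}.Finite ∧
      {u | G.Adj v u ∧ h u = h v + 1}.ncard = d - 1)
    (hstep : ∀ v u, G.Adj v u → h u = h v + 1 ∨ h u = h v - 1)
    (U : Set V) (hU : U.Finite) :
    ∑ᶠ v ∈ U, ∑ᶠ u ∈ {u | G.Adj v u ∧ u ∉ U}, (lam * α ^ h u - α ^ h v) ≤ 0 := by
  classical
  have hα0 : (α : ℝ) ≠ 0 := ne_of_gt hα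
  set F : V → V → ℝ := fun v u => lam * α ^ h u - α ^ h v with hFdef
  -- parent of each vertex
  choose p hp hpu using hparent
  -- neighborhoods are finite
  have hNsub : ∀ v, {u | G.Adj v u} ⊆ insert (p v) {u | G.Adj v u ∧ h u = h v + 1} := by
    intro v u hu
    rcases hstep v u hu with h1 | h2
    · exact Set.mem_insert_of_mem _ ⟨hu, h1⟩
    · exact (hpu v u ⟨hu, h2⟩) ▸ Set.mem_insert _ _
  have hNfin : ∀ v, {u | G.Adj v u}.Finite := fun v =>
    Set.Finite.subset ((hchildren v).1.insert (p v)) (hNsub v)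
  set Nv : V → Finset V := fun v => (hNfin v).toFinset with hNv
  have hmemN : ∀ v u, u ∈ Nv v ↔ G.Adj v u := by
    intro v u; simp [hNv, Set.Finite.mem_toFinset]
  -- the full-neighborhood sum is ≤ 0
  have key : ∀ v, ∑ u ∈ Nv v, F v u ≤ 0 := by
    intro v
    set Cv : Finset V := ((hchildren v).1).toFinset with hCv
    have hmemC : ∀ u, u ∈ Cv ↔ G.Adj v u ∧ h u = h v + 1 := by
      intro u; simp [hCv, Set.Finite.mem_toFinset]
    have hcardC : Cv.card = d - 1 := by
      have := (hchildren v).2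
      rwa [Set.ncard_eq_toFinset_card _ (hchildren v).1] at this
    have hpC : p v ∉ Cv := by
      intro hmem
      have := ((hmemC (p v)).1 hmem).2
      have := (hp v).2
      omega
    have hNeq : Nv v = insert (p v) Cv := by
      ext u
      simp only [hmemN, Finset.mem_insert, hmemC]
      constructor
      · intro hu
        rcases hstep v u hu with h1 | h2
        · exact Or.inr ⟨hu, h1⟩
        · exact Or.inl (hpu v u ⟨hu, h2⟩)
      · rintro (rfl | ⟨hu, _⟩)
        · exact (hp v).1
        · exact hu
    rw [hNeq, Finset.sum_insert hpC]
    have hsumC : ∑ u ∈ Cv, F v u = (d - 1 : ℝ) * (lam * α ^ (h v + 1) - α ^ h v) := by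
      have hcong : ∀ u ∈ Cv, F v u = lam * α ^ (h v + 1) - α ^ h v := by
        intro u hu
        simp only [hFdef]
        rw [((hmemC u).1 hu).2]
      rw [Finset.sum_congr rfl hcong, Finset.sum_const, hcardC, nsmul_eq_mul,
        Nat.cast_sub (by omega : 1 ≤ d)]
      push_cast; ring
    rw [hsumC]
    have hhp : h (p v) = h v - 1 := (hp v).2
    rw [hFdef]; simp only [hhp]
    set β : ℝ := α ^ (h v - 1) with hβ
    have hβpos : 0 < β := zpow_pos hα _
    have e1 : α ^ h v = β * α := by
      rw [hβ, ← zpow_add_one₀ hα0]; ring_nf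
    have e2 : α ^ (h v + 1) = β * α ^ 2 := by
      rw [hβ, ← zpow_natCast α 2, ← zpow_add₀ hα0]
      congr 1; ring
    rw [e1, e2]
    have : (lam * β - β * α) + (d - 1 : ℝ) * (lam * (β * α ^ 2) - β * α)
        = β * (lam * (d - 1) * α ^ 2 - d * α + lam) := by ring
    rw [this]
    exact mul_nonpos_of_nonneg_of_nonpos hβpos.le hquad
  -- convert finsums to finset sums
  set UF : Finset V := hU.toFinset with hUF
  have hmemU : ∀ u, u ∈ UF ↔ u ∈ U := by intro u; simp [hUF, Set.Finite.mem_toFinset]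
  have hBfin : ∀ v, {u | G.Adj v u ∧ u ∉ U}.Finite := fun v =>
    Set.Finite.subset (hNfin v) (fun u hu => hu.1)
  have hstep1 : ∑ᶠ v ∈ U, ∑ᶠ u ∈ {u | G.Adj v u ∧ u ∉ U}, F v u
      = ∑ v ∈ UF, ∑ u ∈ (Nv v).filter (· ∉ UF), F v u := by
    rw [finsum_mem_eq_finite_toFinset_sum _ hU]
    refine Finset.sum_congr rfl (fun v _ => ?_)
    rw [finsum_mem_eq_finite_toFinset_sum _ (hBfin v)]
    refine Finset.sum_congr ?_ (fun _ _ => rfl)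
    ext u
    simp [Set.Finite.mem_toFinset, hmemN, hmemU, Finset.mem_filter]
  rw [hstep1]
  have hsplit : ∀ v, ∑ u ∈ (Nv v).filter (· ∉ UF), F v u
      = ∑ u ∈ Nv v, F v u - ∑ u ∈ (Nv v).filter (· ∈ UF), F v u := by
    intro v
    have := Finset.sum_filter_add_sum_filter_not (Nv v) (· ∈ UF) (F v)
    linarith [this]
  simp_rw [hsplit, Finset.sum_sub_distrib]
  have hA : ∑ v ∈ UF, ∑ u ∈ Nv v, F v u ≤ 0 :=
    Finset.sum_nonpos (fun v _ => key v)
  have hBform : ∀ v, ∑ u ∈ (Nv v).filter (· ∈ UF), F v u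
      = ∑ u ∈ UF, if G.Adj v u then F v u else 0 := by
    intro v
    rw [← Finset.sum_filter]
    refine Finset.sum_congr ?_ (fun _ _ => rfl)
    ext u
    simp only [Finset.mem_filter, hmemN]
    tauto
  have hB : 0 ≤ ∑ v ∈ UF, ∑ u ∈ (Nv v).filter (· ∈ UF), F v u := by
    simp_rw [hBform]
    have expand : ∀ v u, (if G.Adj v u then F v u else 0)
        = lam * (if G.Adj v u then α ^ h u else 0) - (if G.Adj v u then α ^ h v else 0) := by
      intro v u; by_cases hadj : G.Adj v u <;> simp [hadj, hFdef]
    simp_rw [expand, Finset.sum_sub_distrib, ← Finset.mul_sum]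
    have hswap : ∑ v ∈ UF, ∑ u ∈ UF, (if G.Adj v u then α ^ h u else 0)
        = ∑ v ∈ UF, ∑ u ∈ UF, (if G.Adj v u then α ^ h v else 0) := by
      rw [Finset.sum_comm]
      refine Finset.sum_congr rfl (fun v _ => Finset.sum_congr rfl (fun u _ => ?_))
      rw [G.adj_comm]
    rw [hswap]
    have hT : 0 ≤ ∑ v ∈ UF, ∑ u ∈ UF, (if G.Adj v u then α ^ h v else 0) :=
      Finset.sum_nonneg fun v _ => Finset.sum_nonneg fun u _ => by
        split_ifs
        · exact (zpow_pos hα _).le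
        · exact le_refl 0
    nlinarith
  linarith
end
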